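/- Let G be a graph containing an induced antihole C = complement of C_{2t+1} (t ≥ 2) with vertices v_1,...,v_{2t+1} (v_i v_j ∈ E iff |i−j|>1, indices mod 2t+1), such that G is (complement of (K_3+2P_1))-free. Let u, v ∈ S(v_i, v_{i+1}) with uv ∉ E(G). Then every vertex whose neighborhood on C has size 2t or 2t+1 is nonadjacent to at least one of u and v. -/

import Mathlib

open SimpleGraph
open Fin.NatCast Fin.CommRing

/-- `G` contains no induced subgraph isomorphic to `H`. -/
def HFree {W V : Type*} (H : SimpleGraph W) (G : SimpleGraph V) : Prop :=
  IsEmpty (H ↪g G)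

/-- `G` is `k`-vertex-critical: `χ(G) = k` and deleting any vertex decreases
the chromatic number below `k`. -/
def IsKVertexCritical {V : Type*} (G : SimpleGraph V) (k : ℕ) : Prop :=
  G.chromaticNumber = k ∧ ∀ v : V, (G.induce {v}ᶜ).chromaticNumber < k

/-- The star `K_{1,s}`: center `0`, leaves `1, …, s`. -/
def starGraph (s : ℕ) : SimpleGraph (Fin (s + 1)) :=
  SimpleGraph.fromRel (fun i _ => (i : ℕ) = 0)

/-- `K_{1,s} + P_1`: the disjoint union of the star `K_{1,s}`
(center `0`, leaves `1, …, s`) and the isolated vertex `s + 1`. -/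
def starPlusP1 (s : ℕ) : SimpleGraph (Fin (s + 2)) :=
  SimpleGraph.fromRel (fun i j => (i : ℕ) = 0 ∧ (j : ℕ) ≠ 0 ∧ (j : ℕ) ≤ s)

/-- The complement of `K_3 + 2P_1`: vertices `0,1,2` pairwise nonadjacent,
vertices `3,4` adjacent to everything else. -/
def coK3Plus2P1 : SimpleGraph (Fin 5) :=
  SimpleGraph.fromRel (fun i j => 3 ≤ (i : ℕ) ∨ 3 ≤ (j : ℕ))

private lemma anti_adj_aux (t : ℕ) (ht : 2 ≤ t) (i : Fin (2*t+1)) (c d : ℕ) (hd : d ≤ 4)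
    (h2 : c + 2 ≤ d) (h3 : d ≤ c + 3) :
    ((cycleGraph (2*t+1))ᶜ).Adj (i + (c : Fin (2*t+1))) (i + (d : Fin (2*t+1))) := by
  have hn : 5 ≤ 2*t+1 := by omega
  have hcd : (c : Fin (2*t+1)) ≠ (d : Fin (2*t+1)) := by
    rw [Fin.ne_iff_vne, Fin.val_cast_of_lt (by omega), Fin.val_cast_of_lt (by omega)]
    omega
  rw [compl_adj]
  constructor
  · simpa using hcd
  · rw [cycleGraph_adj']
    push_neg
    have e1 : (i + (d:Fin (2*t+1))) - (i + c) = ((d - c : ℕ) : Fin (2*t+1)) := by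
      rw [show ((d - c : ℕ) : Fin (2*t+1)) = (d : Fin (2*t+1)) - c from Nat.cast_sub (R := Fin (2*t+1)) (show c ≤ d by omega)]; ring
    have e2 : (i + (c:Fin (2*t+1))) - (i + d) = -((d - c : ℕ) : Fin (2*t+1)) := by
      rw [show ((d - c : ℕ) : Fin (2*t+1)) = (d : Fin (2*t+1)) - c from Nat.cast_sub (R := Fin (2*t+1)) (show c ≤ d by omega)]; ring
    rw [e1, e2]
    have hv : (((d - c : ℕ) : Fin (2*t+1))).val = d - c := Fin.val_cast_of_lt (by omega)
    constructor
    · rw [Fin.coe_neg, hv, Nat.mod_eq_of_lt (by omega)]; omega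
    · rw [hv]; omega


private lemma add_cast_eq_iff (t : ℕ) (ht : 2 ≤ t) (i : Fin (2*t+1)) (c d : ℕ)
    (hc : c ≤ 4) (hd : d ≤ 4) :
    i + (c : Fin (2*t+1)) = i + (d : Fin (2*t+1)) ↔ c = d := by
  rw [add_right_inj, Fin.ext_iff, Fin.val_cast_of_lt (by omega), Fin.val_cast_of_lt (by omega)]

theorem stmt13 {V : Type*} (G : SimpleGraph V) (hH : HFree coK3Plus2P1 G)
    (t : ℕ) (ht : 2 ≤ t) (f : ((cycleGraph (2 * t + 1))ᶜ) ↪g G)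
    (i : Fin (2 * t + 1)) (u v : V) (hne : u ≠ v)
    (hu : u ∉ Set.range f) (hu2 : ∀ j, G.Adj u (f j) ↔ (j = i ∨ j = i + 1))
    (hv : v ∉ Set.range f) (hv2 : ∀ j, G.Adj v (f j) ↔ (j = i ∨ j = i + 1))
    (huv : ¬ G.Adj u v)
    (w : V) (hw : w ∉ Set.range f)
    (hwcard : 2 * t ≤ {j : Fin (2 * t + 1) | G.Adj w (f j)}.ncard) :
    ¬ G.Adj w u ∨ ¬ G.Adj w v := by
  by_contra hcon
  push_neg at hcon
  obtain ⟨hwu, hwv⟩ := hcon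
  -- w misses at most one vertex of the antihole
  have key : ∀ a b : Fin (2*t+1), a ≠ b → G.Adj w (f a) ∨ G.Adj w (f b) := by
    intro a b hab
    by_contra h
    push_neg at h
    have hsub : {j : Fin (2*t+1) | G.Adj w (f j)} ⊆ ({a, b} : Set (Fin (2*t+1)))ᶜ := by
      intro x hx
      simp only [Set.mem_compl_iff, Set.mem_insert_iff, Set.mem_singleton_iff]
      rintro (rfl | rfl)
      · exact h.1 hx
      · exact h.2 hx
    have h1 := Set.ncard_le_ncard hsub (Set.toFinite _)
    have h2 := Set.ncard_add_ncard_compl ({a, b} : Set (Fin (2*t+1)))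
    rw [Set.ncard_pair hab] at h2
    have h3 : Nat.card (Fin (2*t+1)) = 2*t+1 := by simp
    omega
  have hone : ((1:ℕ) : Fin (2*t+1)) = 1 := Nat.cast_one
  have hzero : i + ((0:ℕ) : Fin (2*t+1)) = i := by simp
  -- choose c ∈ {0,1} with w adjacent to f (i + c)
  obtain ⟨c, hc01, hkadj⟩ : ∃ c : ℕ, (c = 0 ∨ c = 1) ∧ G.Adj w (f (i + (c : Fin (2*t+1)))) := by
    have hne' : i + ((0:ℕ) : Fin (2*t+1)) ≠ i + ((1:ℕ) : Fin (2*t+1)) := by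
      rw [Ne, add_cast_eq_iff t ht i 0 1 (by omega) (by omega)]; omega
    rcases key _ _ hne' with h | h
    · exact ⟨0, Or.inl rfl, h⟩
    · exact ⟨1, Or.inr rfl, h⟩
  -- choose d ∈ {c+2, c+3} with w adjacent to f (i + d)
  obtain ⟨d, hd4, hcd2, hcd3, hjadj⟩ :
      ∃ d : ℕ, d ≤ 4 ∧ c + 2 ≤ d ∧ d ≤ c + 3 ∧ G.Adj w (f (i + (d : Fin (2*t+1)))) := by
    have hne' : i + ((c+2:ℕ) : Fin (2*t+1)) ≠ i + ((c+3:ℕ) : Fin (2*t+1)) := by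
      rw [Ne, add_cast_eq_iff t ht i (c+2) (c+3) (by omega) (by omega)]; omega
    rcases key _ _ hne' with h | h
    · exact ⟨c+2, by omega, by omega, by omega, h⟩
    · exact ⟨c+3, by omega, by omega, by omega, h⟩
  set k : Fin (2*t+1) := i + (c : Fin (2*t+1)) with hk
  set j : Fin (2*t+1) := i + (d : Fin (2*t+1)) with hj
  -- adjacency facts
  have hfkj : G.Adj (f k) (f j) := f.map_adj_iff.mpr (anti_adj_aux t ht i c d hd4 hcd2 hcd3)
  have hki : k = i ∨ k = i + 1 := by
    rcases hc01 with rfl | rfl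
    · left; exact hzero
    · right; rw [hk, hone]
  have hufk : G.Adj u (f k) := (hu2 k).mpr hki
  have hvfk : G.Adj v (f k) := (hv2 k).mpr hki
  have hjne : ¬ (j = i ∨ j = i + 1) := by
    rintro (h | h)
    · rw [hj] at h
      nth_rewrite 2 [← hzero] at h
      rw [add_cast_eq_iff t ht i d 0 (by omega) (by omega)] at h; omega
    · rw [hj, ← hone, add_cast_eq_iff t ht i d 1 (by omega) (by omega)] at h; omega
  have hufj : ¬ G.Adj u (f j) := fun h => hjne ((hu2 j).mp h)
  have hvfj : ¬ G.Adj v (f j) := fun h => hjne ((hv2 j).mp h)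
  -- distinctness facts
  have hufj' : u ≠ f j := fun h => hu ⟨j, h.symm⟩
  have hufk' : u ≠ f k := fun h => hu ⟨k, h.symm⟩
  have hvfj' : v ≠ f j := fun h => hv ⟨j, h.symm⟩
  have hvfk' : v ≠ f k := fun h => hv ⟨k, h.symm⟩
  have hwu' : w ≠ u := hwu.ne
  have hwv' : w ≠ v := hwv.ne
  have hwfj' : w ≠ f j := fun h => hw ⟨j, h.symm⟩
  have hwfk' : w ≠ f k := fun h => hw ⟨k, h.symm⟩
  have hjk' : f j ≠ f k := fun h => by
    have h2 := f.injective h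
    rw [hj, hk, add_cast_eq_iff t ht i d c (by omega) (by omega)] at h2
    omega
  have hanti := anti_adj_aux t ht i c d hd4 hcd2 hcd3
  rw [← hk, ← hj] at hanti
  have hA1 : ¬ k = j ∧ ¬ (cycleGraph (2*t+1)).Adj k j := (compl_adj _ _ _).mp hanti
  have hA2 : ¬ j = k ∧ ¬ (cycleGraph (2*t+1)).Adj j k := (compl_adj _ _ _).mp hanti.symm
  have hA1' : ¬ (k:ℕ) = (j:ℕ) ∧ ¬ (cycleGraph (2*t+1)).Adj k j :=
    ⟨fun h => hA1.1 (Fin.ext h), hA1.2⟩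
  have hA2' : ¬ (j:ℕ) = (k:ℕ) ∧ ¬ (cycleGraph (2*t+1)).Adj j k :=
    ⟨fun h => hA2.1 (Fin.ext h), hA2.2⟩
  -- build the forbidden induced subgraph
  refine hH.elim ?_
  refine ⟨⟨![u, v, f j, w, f k], ?_⟩, ?_⟩
  · intro a b hab
    fin_cases a <;> fin_cases b <;>
      simp only [Matrix.cons_val_zero, Matrix.cons_val_one, Matrix.head_cons,
        Matrix.cons_val_two, Matrix.tail_cons, Matrix.cons_val_three,
        Matrix.cons_val_four, Matrix.cons_val_succ] at hab ⊢ <;>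
      first
        | rfl
        | exact absurd hab hne | exact absurd hab.symm hne
        | exact absurd hab hufj' | exact absurd hab.symm hufj'
        | exact absurd hab hufk' | exact absurd hab.symm hufk'
        | exact absurd hab hvfj' | exact absurd hab.symm hvfj'
        | exact absurd hab hvfk' | exact absurd hab.symm hvfk'
        | exact absurd hab hwu' | exact absurd hab.symm hwu'
        | exact absurd hab hwv' | exact absurd hab.symm hwv'
        | exact absurd hab hwfj' | exact absurd hab.symm hwfj'
        | exact absurd hab hwfk' | exact absurd hab.symm hwfk'
        | exact absurd hab hjk' | exact absurd hab.symm hjk'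
  · intro a b
    fin_cases a <;> fin_cases b <;>
      simp only [Matrix.cons_val_zero, Matrix.cons_val_one, Matrix.head_cons,
        Matrix.cons_val_two, Matrix.tail_cons, Matrix.cons_val_three,
        Matrix.cons_val_four, Matrix.cons_val_succ, coK3Plus2P1,
        SimpleGraph.fromRel_adj] <;>
      norm_num [Fin.ext_iff] <;>
      first
        | exact G.loopless _ | exact hA1 | exact hA2 | exact hA1' | exact hA2'
        | exact hwu.symm | exact hwv.symm | exact hwu | exact hwv
        | exact hjadj | exact hkadj | exact hjadj.symm | exact hkadj.symm
        | exact hufk | exact hvfk | exact hufk.symm | exact hvfk.symm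
        | exact hfkj | exact hfkj.symm
        | exact huv | exact hufj | exact hvfj
        | exact fun h => huv h.symm
        | exact fun h => hufj h.symm
        | exact fun h => hvfj h.symm
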